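/- In the stabilizer game for the eight-qubit code, if the players share a state in the code space and each player answers question D ∈ {X,Z} by measuring the Pauli operator D on their qubit, the referee accepts with probability 1; consequently the nonlocal value of the game is 1. Moreover, for any strategy with value ≥ 1 − ε and any stabilizer element P = (−1)^ν ⊗_{i=1}^8 D^{(i)} ∈ Ξ, the corresponding product of measured reflections satisfies Tr((−1)^ν (⊗_i D̂^{(i)}) ρ) ≥ 1 − 32ε. -/

import Mathlib

open Matrix ComplexOrder

/-- Pauli measurement labels: `false` stands for `X`, `true` stands for `Z`. -/
def pmat : Bool → Matrix (Fin 2) (Fin 2) ℂ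
  | false => !![0, 1; 1, 0]
  | true => !![1, 0; 0, -1]

/-- The tensor product of one operator per player, acting on the tensor product of the
eight players' spaces. -/
noncomputable def bigT {d : Fin 8 → ℕ} (A : ∀ i, Matrix (Fin (d i)) (Fin (d i)) ℂ) :
    Matrix (∀ i, Fin (d i)) (∀ i, Fin (d i)) ℂ :=
  Matrix.of fun f g => ∏ i, A i (f i) (g i)

/-- The question (`X` or `Z`) sent to player `i` for the stabilizer element of the
eight-qubit code labelled by `c` (selecting `g₁` for `false` or `g₂` for `true`) and
`μ : Fin 4 → Bool` (selecting which of `g₃,…,g₆` are multiplied in).  The eight-qubit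
code has generators `g₁ = X⊗⁸`, `g₂ = (XZ)⊗⁴`, and `g₃,…,g₆ = YY` on the four qubit
pairs; the `32` elements of `Ξ` are `g₁∏gⱼ^{μⱼ}` and `g₂∏gⱼ^{μⱼ}`, whose tensor
factors are all `X` or `Z`. -/
def quest (c : Bool) (μ : Fin 4 → Bool) (i : Fin 8) : Bool :=
  xor (c && decide ((i : ℕ) % 2 = 1)) (μ ⟨(i : ℕ) / 2, by have := i.isLt; omega⟩)

/-- The sign `(−1)^ν` of the stabilizer element of `Ξ` labelled by `(c, μ)`. -/
noncomputable def sgn (c : Bool) (μ : Fin 4 → Bool) : ℂ :=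
  if c then 1 else
    (if (Finset.univ.filter fun j => μ j = true).card % 2 = 1 then -1 else 1)

/-- The value of a strategy `(ρ, D̂)` in the stabilizer game for the eight-qubit code:
the referee picks one of the `32` elements of `Ξ` uniformly at random, sends its `i`-th
tensor factor to player `i`, and accepts iff the parity of the answers matches the
sign bit. -/
noncomputable def gameValue {d : Fin 8 → ℕ}
    (Dh : ∀ i, Bool → Matrix (Fin (d i)) (Fin (d i)) ℂ)
    (ρ : Matrix (∀ i, Fin (d i)) (∀ i, Fin (d i)) ℂ) : ℝ :=
  (32 : ℝ)⁻¹ * ∑ c : Bool, ∑ μ : Fin 4 → Bool,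
    ((((2 : ℂ)⁻¹ • ((1 : Matrix (∀ i, Fin (d i)) (∀ i, Fin (d i)) ℂ) +
        sgn c μ • bigT fun i => Dh i (quest c μ i))) * ρ).trace).re

section BigTLemmas
variable {d : Fin 8 → ℕ}

lemma bigT_mul (A B : ∀ i, Matrix (Fin (d i)) (Fin (d i)) ℂ) :
    bigT A * bigT B = bigT fun i => A i * B i := by
  ext f g
  simp only [bigT, Matrix.mul_apply, Matrix.of_apply]
  rw [Finset.prod_univ_sum (fun i => (Finset.univ : Finset (Fin (d i))))
    (fun i j => A i (f i) j * B i j (g i)), Fintype.piFinset_univ]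
  exact Finset.sum_congr rfl fun h _ => (Finset.prod_mul_distrib).symm

lemma bigT_one : bigT (fun i => (1 : Matrix (Fin (d i)) (Fin (d i)) ℂ)) = 1 := by
  ext f g
  simp only [bigT, Matrix.of_apply, Matrix.one_apply]
  by_cases h : f = g
  · subst h; simp
  · rw [if_neg h]
    obtain ⟨i, hi⟩ := Function.ne_iff.mp h
    exact Finset.prod_eq_zero (Finset.mem_univ i) (by simp [hi])

lemma bigT_conjTranspose (A : ∀ i, Matrix (Fin (d i)) (Fin (d i)) ℂ) :
    (bigT A)ᴴ = bigT fun i => (A i)ᴴ := by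
  ext f g
  simp only [bigT, Matrix.conjTranspose_apply, Matrix.of_apply, star_prod]

end BigTLemmas

lemma psd_trace_nonneg' {n : Type*} [Fintype n] [DecidableEq n] {S : Matrix n n ℂ}
    (hS : S.PosSemidef) : (0:ℂ) ≤ S.trace := by
  rw [Matrix.trace]
  apply Finset.sum_nonneg
  intro i _
  exact hS.diag_nonneg

lemma trace_mul_psd_nonneg {n : Type*} [Fintype n] [DecidableEq n] (X ρ : Matrix n n ℂ)
    (hρ : ρ.PosSemidef) : 0 ≤ ((Xᴴ * X * ρ).trace).re := by
  have h1 : (X * ρ * Xᴴ).trace = (Xᴴ * X * ρ).trace := Matrix.trace_mul_cycle X ρ Xᴴ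
  have h2 : (0:ℂ) ≤ (X * ρ * Xᴴ).trace := psd_trace_nonneg' (hρ.mul_mul_conjTranspose_same X)
  rw [h1] at h2
  simpa using (Complex.le_def.mp h2).1

lemma natCast_mul_trace {n : Type*} [Fintype n] [DecidableEq n] (k : ℕ) (X : Matrix n n ℂ) :
    (((k:ℕ) : Matrix n n ℂ) * X).trace = (k:ℂ) * X.trace := by
  rw [← nsmul_eq_mul, Matrix.trace_smul, nsmul_eq_mul]

lemma triple_trace_ineq {n : Type*} [Fintype n] [DecidableEq n]
    {A B C P ρ : Matrix n n ℂ} (hA : Aᴴ = A) (hB : Bᴴ = B) (hC : Cᴴ = C) (hPh : Pᴴ = P)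
    (hA2 : A * A = 1) (hB2 : B * B = 1) (hC2 : C * C = 1) (hP : A * (B * C) = P)
    (hρ : ρ.PosSemidef) (htr : ρ.trace = 1) :
    6 * (((A * ρ).trace.re) + ((B * ρ).trace.re) + ((C * ρ).trace.re)) ≤
      16 + 2 * ((P * ρ).trace.re) := by
  have hCBA : C * (B * A) = P := by
    have h := congrArg Matrix.conjTranspose hP
    simpa [Matrix.conjTranspose_mul, hA, hB, hC, hPh, mul_assoc] using h
  have e1 : ∀ X : Matrix n n ℂ, A * (A * X) = X := fun X => by rw [← mul_assoc, hA2, one_mul]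
  have e2 : ∀ X : Matrix n n ℂ, B * (B * X) = X := fun X => by rw [← mul_assoc, hB2, one_mul]
  have e3 : ∀ X : Matrix n n ℂ, C * (C * X) = X := fun X => by rw [← mul_assoc, hC2, one_mul]
  set L1 : Matrix n n ℂ := 1 - A with hL1
  set L2 : Matrix n n ℂ := A - A * B with hL2
  set L3 : Matrix n n ℂ := A * B - A * (B * C) with hL3
  have key : (L1 - L2)ᴴ * (L1 - L2) + (L1 - L3)ᴴ * (L1 - L3) + (L2 - L3)ᴴ * (L2 - L3)
      = 16 • (1 : Matrix n n ℂ) - 6 • A - 6 • B - 6 • C + (P + P) := by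
    nth_rewrite 2 [← hCBA]
    rw [← hP]
    simp only [hL1, hL2, hL3, Matrix.conjTranspose_sub, Matrix.conjTranspose_mul,
      Matrix.conjTranspose_one, hA, hB, hC]
    simp only [sub_mul, mul_sub, one_mul, mul_one, mul_assoc, hA2, hB2, hC2, e1, e2, e3]
    noncomm_ring
  have n1 : 0 ≤ (((L1 - L2)ᴴ * (L1 - L2) * ρ).trace).re := trace_mul_psd_nonneg _ _ hρ
  have n2 : 0 ≤ (((L1 - L3)ᴴ * (L1 - L3) * ρ).trace).re := trace_mul_psd_nonneg _ _ hρ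
  have n3 : 0 ≤ (((L2 - L3)ᴴ * (L2 - L3) * ρ).trace).re := trace_mul_psd_nonneg _ _ hρ
  have sumeq : ((L1 - L2)ᴴ * (L1 - L2) * ρ).trace + ((L1 - L3)ᴴ * (L1 - L3) * ρ).trace
      + ((L2 - L3)ᴴ * (L2 - L3) * ρ).trace
      = 16 - 6 * (A * ρ).trace - 6 * (B * ρ).trace - 6 * (C * ρ).trace + 2 * (P * ρ).trace := by
    have expand : ((L1 - L2)ᴴ * (L1 - L2) * ρ).trace + ((L1 - L3)ᴴ * (L1 - L3) * ρ).trace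
        + ((L2 - L3)ᴴ * (L2 - L3) * ρ).trace
        = (((L1 - L2)ᴴ * (L1 - L2) + (L1 - L3)ᴴ * (L1 - L3) + (L2 - L3)ᴴ * (L2 - L3)) * ρ).trace := by
      simp [add_mul, Matrix.trace_add]
    rw [expand, key]
    simp only [add_mul, sub_mul, smul_mul_assoc, one_mul, Matrix.trace_add, Matrix.trace_sub,
      Matrix.trace_smul, htr, nsmul_eq_mul, mul_assoc, natCast_mul_trace]
    push_cast
    ring
  set x1 := ((L1 - L2)ᴴ * (L1 - L2) * ρ).trace with hx1
  set x2 := ((L1 - L3)ᴴ * (L1 - L3) * ρ).trace with hx2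
  set x3 := ((L2 - L3)ᴴ * (L2 - L3) * ρ).trace with hx3
  set ta := (A * ρ).trace with hta
  set tb := (B * ρ).trace with htb
  set tc := (C * ρ).trace with htc
  set tp := (P * ρ).trace with htp
  have hre := congrArg Complex.re sumeq
  simp only [Complex.add_re, Complex.sub_re, Complex.mul_re] at hre
  norm_num at hre
  linarith

lemma refl_trace_le_one {n : Type*} [Fintype n] [DecidableEq n]
    {M ρ : Matrix n n ℂ} (hM : Mᴴ = M) (hM2 : M * M = 1)
    (hρ : ρ.PosSemidef) (htr : ρ.trace = 1) : ((M * ρ).trace).re ≤ 1 := by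
  have key : (1 - M)ᴴ * (1 - M) = ((1 : Matrix n n ℂ) + 1) - (M + M) := by
    simp only [Matrix.conjTranspose_sub, Matrix.conjTranspose_one, hM, sub_mul, mul_sub,
      one_mul, mul_one, hM2]
    noncomm_ring
  have n0 : 0 ≤ (((1 - M)ᴴ * (1 - M) * ρ).trace).re := trace_mul_psd_nonneg _ _ hρ
  have sumeq : ((1 - M)ᴴ * (1 - M) * ρ).trace = 2 - ((M * ρ).trace + (M * ρ).trace) := by
    rw [key]
    simp only [sub_mul, add_mul, one_mul, Matrix.trace_sub, Matrix.trace_add, htr]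
    ring
  set t := (M * ρ).trace
  rw [sumeq] at n0
  simp only [Complex.sub_re, Complex.add_re] at n0
  norm_num at n0
  linarith

lemma sgn_one_or (c : Bool) (μ : Fin 4 → Bool) : sgn c μ = 1 ∨ sgn c μ = -1 := by
  unfold sgn; split_ifs <;> simp

lemma star_sgn (c : Bool) (μ : Fin 4 → Bool) : star (sgn c μ) = sgn c μ := by
  rcases sgn_one_or c μ with h | h <;> rw [h] <;> simp

lemma sgn_mul_self (c : Bool) (μ : Fin 4 → Bool) : sgn c μ * sgn c μ = 1 := by
  rcases sgn_one_or c μ with h | h <;> rw [h] <;> norm_num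

/-- Pointwise xor of two `Fin 4 → Bool` vectors. -/
def xorv (a m : Fin 4 → Bool) : Fin 4 → Bool := fun j => xor (a j) (m j)

/-- The observable measured jointly by the eight players on the stabilizer element
labelled `(c, m)`. -/
noncomputable def Mop {d : Fin 8 → ℕ} (Dh : ∀ i, Bool → Matrix (Fin (d i)) (Fin (d i)) ℂ)
    (c : Bool) (m : Fin 4 → Bool) : Matrix (∀ i, Fin (d i)) (∀ i, Fin (d i)) ℂ :=
  sgn c m • bigT fun i => Dh i (quest c m i)

section Mlem
variable {d : Fin 8 → ℕ} (Dh : ∀ i, Bool → Matrix (Fin (d i)) (Fin (d i)) ℂ)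

lemma Mop_herm (hherm : ∀ i D, (Dh i D).IsHermitian) (c : Bool) (m : Fin 4 → Bool) :
    (Mop Dh c m)ᴴ = Mop Dh c m := by
  unfold Mop
  rw [Matrix.conjTranspose_smul, bigT_conjTranspose, star_sgn,
    show (fun i => (Dh i (quest c m i))ᴴ) = fun i => Dh i (quest c m i) from
      funext fun i => hherm i _]

lemma Mop_sq (hunit : ∀ i D, Dh i D * Dh i D = 1) (c : Bool) (m : Fin 4 → Bool) :
    Mop Dh c m * Mop Dh c m = 1 := by
  unfold Mop
  rw [smul_mul_assoc, Matrix.mul_smul, smul_smul, sgn_mul_self, bigT_mul]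
  rw [show (fun i => Dh i (quest c m i) * Dh i (quest c m i))
      = fun i => (1 : Matrix (Fin (d i)) (Fin (d i)) ℂ) from funext fun i => hunit i _]
  rw [bigT_one, one_smul]

lemma Mop_triple (hunit : ∀ i D, Dh i D * Dh i D = 1) (c : Bool) (μ ν ν' : Fin 4 → Bool)
    (hdisj : ∀ j, ν j = false ∨ ν' j = false)
    (hpar : ((Finset.univ.filter fun j => xorv ν' μ j = true).card
      + (Finset.univ.filter fun j => xorv (xorv ν ν') μ j = true).card
      + (Finset.univ.filter fun j => xorv ν μ j = true).card) % 2
      = (Finset.univ.filter fun j => μ j = true).card % 2) :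
    Mop Dh c (xorv ν' μ) * (Mop Dh c (xorv (xorv ν ν') μ) * Mop Dh c (xorv ν μ)) = Mop Dh c μ := by
  have hsgn : sgn c (xorv ν' μ) * sgn c (xorv (xorv ν ν') μ) * sgn c (xorv ν μ) = sgn c μ := by
    cases c
    · unfold sgn
      simp only [Bool.false_eq_true, if_false]
      rcases Nat.mod_two_eq_zero_or_one ((Finset.univ.filter fun j => xorv ν' μ j = true).card) with ha | ha <;>
      rcases Nat.mod_two_eq_zero_or_one ((Finset.univ.filter fun j => xorv (xorv ν ν') μ j = true).card) with hb | hb <;>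
      rcases Nat.mod_two_eq_zero_or_one ((Finset.univ.filter fun j => xorv ν μ j = true).card) with hc | hc <;>
      rcases Nat.mod_two_eq_zero_or_one ((Finset.univ.filter fun j => μ j = true).card) with hm | hm <;>
        first
          | (exfalso; omega)
          | (simp only [ha, hb, hc, hm]; norm_num)
    · simp [sgn]
  have hplayer : ∀ i, Dh i (quest c (xorv ν' μ) i)
      * (Dh i (quest c (xorv (xorv ν ν') μ) i) * Dh i (quest c (xorv ν μ) i))
      = Dh i (quest c μ i) := by
    intro i
    have hq : ∀ m : Fin 4 → Bool, quest c m i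
        = xor (c && decide ((i : ℕ) % 2 = 1)) (m ⟨(i : ℕ) / 2, by have := i.isLt; omega⟩) :=
      fun m => rfl
    rcases hdisj ⟨(i : ℕ) / 2, by have := i.isLt; omega⟩ with h | h
    · have e1 : quest c (xorv ν μ) i = quest c μ i := by
        rw [hq, hq]; congr 1; simp [xorv, h]
      have e2 : quest c (xorv (xorv ν ν') μ) i = quest c (xorv ν' μ) i := by
        rw [hq, hq]; congr 1; simp [xorv, h]
      rw [e2, e1, ← mul_assoc, hunit i _, one_mul]
    · have e1 : quest c (xorv ν' μ) i = quest c μ i := by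
        rw [hq, hq]; congr 1; simp [xorv, h]
      have e2 : quest c (xorv (xorv ν ν') μ) i = quest c (xorv ν μ) i := by
        rw [hq, hq]; congr 1; simp [xorv, h]
      rw [e1, e2, hunit i _, mul_one]
  unfold Mop
  rw [smul_mul_assoc, smul_mul_assoc, Matrix.mul_smul, Matrix.mul_smul, Matrix.mul_smul,
    smul_smul, smul_smul, bigT_mul, bigT_mul,
    show (fun i => Dh i (quest c (xorv ν' μ) i)
      * (Dh i (quest c (xorv (xorv ν ν') μ) i) * Dh i (quest c (xorv ν μ) i)))
      = fun i => Dh i (quest c μ i) from funext hplayer, hsgn]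

end Mlem

/-- In the stabilizer game for the eight-qubit code: honest players sharing a state in
the code space win with probability `1` (and every strategy has value at most `1`, so
the nonlocal value is `1`); moreover any strategy of value at least `1 − ε` satisfies
`Re Tr((−1)^ν (⊗ᵢ D̂⁽ⁱ⁾) ρ) ≥ 1 − 32ε` for each stabilizer element of `Ξ`. -/
theorem stabilizer_game_rigidity :
    (∀ ρ : Matrix (∀ _ : Fin 8, Fin 2) (∀ _ : Fin 8, Fin 2) ℂ,
      ρ.PosSemidef → ρ.trace = 1 →
      (∀ c μ, (sgn c μ • bigT (d := fun _ => 2) fun i => pmat (quest c μ i)) * ρ = ρ) →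
      gameValue (d := fun _ => 2) (fun _ D => pmat D) ρ = 1) ∧
    (∀ (d : Fin 8 → ℕ) (Dh : ∀ i, Bool → Matrix (Fin (d i)) (Fin (d i)) ℂ)
        (ρ : Matrix (∀ i, Fin (d i)) (∀ i, Fin (d i)) ℂ),
      ρ.PosSemidef → ρ.trace = 1 →
      (∀ i D, (Dh i D).IsHermitian) → (∀ i D, Dh i D * Dh i D = 1) →
      (∀ i D, (Dh i D).trace = 0) →
      gameValue Dh ρ ≤ 1 ∧
      ∀ ε : ℝ, 1 - ε ≤ gameValue Dh ρ →
        ∀ c μ, 1 - 32 * ε ≤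
          (((sgn c μ • bigT fun i => Dh i (quest c μ i)) * ρ).trace).re) := by
  have hcard : (Finset.univ : Finset (Fin 4 → Bool)).card = 16 := by decide
  constructor
  · -- honest strategy wins with probability 1
    intro ρ hpsd htr hstab
    unfold gameValue
    have hone : ∀ (c : Bool) (μ : Fin 4 → Bool),
        ((((2 : ℂ)⁻¹ • ((1 : Matrix (∀ _ : Fin 8, Fin 2) (∀ _ : Fin 8, Fin 2) ℂ) +
          sgn c μ • bigT (d := fun _ => 2) fun i => pmat (quest c μ i))) * ρ).trace).re = 1 := by
      intro c μ
      rw [smul_mul_assoc, add_mul, one_mul, hstab c μ, Matrix.trace_smul, Matrix.trace_add, htr]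
      norm_num
    rw [Finset.sum_congr rfl fun c _ => Finset.sum_congr rfl fun μ _ => hone c μ]
    simp [Finset.sum_const, hcard]
    norm_num
  · intro d Dh ρ hpsd htr hherm hunit _htr0
    set rr : Bool → (Fin 4 → Bool) → ℝ :=
      fun c m => (((sgn c m • bigT fun i => Dh i (quest c m i)) * ρ).trace).re with hrr
    have hrle : ∀ c m, rr c m ≤ 1 := fun c m =>
      refl_trace_le_one (Mop_herm Dh hherm c m) (Mop_sq Dh hunit c m) hpsd htr
    have hnn : ∀ c m, 0 ≤ 1 - rr c m := fun c m => by have := hrle c m; linarith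
    have hsummand : ∀ (c : Bool) (m : Fin 4 → Bool),
        ((((2 : ℂ)⁻¹ • ((1 : Matrix (∀ i, Fin (d i)) (∀ i, Fin (d i)) ℂ) +
          sgn c m • bigT fun i => Dh i (quest c m i))) * ρ).trace).re = (1 + rr c m) / 2 := by
      intro c m
      rw [smul_mul_assoc, add_mul, one_mul, Matrix.trace_smul, Matrix.trace_add, htr, smul_eq_mul,
        show (2:ℂ)⁻¹ = ((2⁻¹:ℝ):ℂ) by norm_num, Complex.re_ofReal_mul]
      simp only [hrr, Complex.add_re, Complex.one_re]
      ring
    have hGV : gameValue Dh ρ = 32⁻¹ * ∑ c : Bool, ∑ m : Fin 4 → Bool, (1 + rr c m)/2 := by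
      unfold gameValue
      exact congrArg (fun x => (32:ℝ)⁻¹ * x)
        (Finset.sum_congr rfl fun c _ => Finset.sum_congr rfl fun m _ => hsummand c m)
    have e1 : ∀ c' : Bool, ∑ m : Fin 4 → Bool, (1 + rr c' m)/2 = 8 + (∑ m : Fin 4 → Bool, rr c' m)/2 := by
      intro c'
      rw [← Finset.sum_div, Finset.sum_add_distrib, Finset.sum_const, hcard]
      norm_num
      ring
    have e2 : ∀ c' : Bool, ∑ m : Fin 4 → Bool, (1 - rr c' m) = 16 - ∑ m : Fin 4 → Bool, rr c' m := by
      intro c'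
      rw [Finset.sum_sub_distrib, Finset.sum_const, hcard]
      norm_num
    have hle1 : gameValue Dh ρ ≤ 1 := by
      rw [hGV, Fintype.sum_bool, e1, e1]
      have h1 : ∑ m : Fin 4 → Bool, rr true m ≤ 16 := by
        calc ∑ m : Fin 4 → Bool, rr true m ≤ ∑ _m : Fin 4 → Bool, (1:ℝ) :=
          Finset.sum_le_sum fun m _ => hrle true m
        _ = 16 := by rw [Finset.sum_const, hcard]; norm_num
      have h2 : ∑ m : Fin 4 → Bool, rr false m ≤ 16 := by
        calc ∑ m : Fin 4 → Bool, rr false m ≤ ∑ _m : Fin 4 → Bool, (1:ℝ) :=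
          Finset.sum_le_sum fun m _ => hrle false m
        _ = 16 := by rw [Finset.sum_const, hcard]; norm_num
      linarith
    refine ⟨hle1, ?_⟩
    intro ε hgv c μ
    have hS : ∑ c' : Bool, ∑ m : Fin 4 → Bool, (1 - rr c' m) ≤ 64 * ε := by
      rw [Fintype.sum_bool, e2, e2]
      rw [hGV, Fintype.sum_bool, e1, e1] at hgv
      linarith
    have houter : ∑ m : Fin 4 → Bool, (1 - rr c m)
        ≤ ∑ c' : Bool, ∑ m : Fin 4 → Bool, (1 - rr c' m) := by
      rw [Fintype.sum_bool]
      have h0 : 0 ≤ ∑ m : Fin 4 → Bool, (1 - rr true m) := Finset.sum_nonneg fun m _ => hnn true m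
      have h1 : 0 ≤ ∑ m : Fin 4 → Bool, (1 - rr false m) := Finset.sum_nonneg fun m _ => hnn false m
      cases c
      · linarith
      · linarith
    have hinv : Function.Involutive (fun δ : Fin 4 → Bool => xorv δ μ) := by
      intro δ; funext j; simp [xorv]
    have hreidx : ∑ m : Fin 4 → Bool, (1 - rr c m) = ∑ δ : Fin 4 → Bool, (1 - rr c (xorv δ μ)) := by
      have h := Equiv.sum_comp (hinv.toPerm _) (fun m => 1 - rr c m)
      simp only [Function.Involutive.coe_toPerm] at h
      exact h.symm
    have hsub : ∑ δ ∈ ({![false,false,false,false], ![false,true,false,false],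
          ![true,true,false,false], ![true,false,false,false], ![false,false,false,true],
          ![false,false,true,true], ![false,false,true,false], ![false,true,false,true],
          ![true,true,true,true], ![true,false,true,false]} : Finset (Fin 4 → Bool)),
        (1 - rr c (xorv δ μ)) ≤ ∑ δ : Fin 4 → Bool, (1 - rr c (xorv δ μ)) :=
      Finset.sum_le_sum_of_subset_of_nonneg (Finset.subset_univ _) (fun i _ _ => hnn c _)
    rw [Finset.sum_insert (by decide), Finset.sum_insert (by decide),
      Finset.sum_insert (by decide), Finset.sum_insert (by decide),
      Finset.sum_insert (by decide), Finset.sum_insert (by decide),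
      Finset.sum_insert (by decide), Finset.sum_insert (by decide),
      Finset.sum_insert (by decide), Finset.sum_singleton] at hsub
    have hz : xorv ![false,false,false,false] μ = μ := by
      funext j; fin_cases j <;> simp [xorv]
    rw [hz] at hsub
    -- the three triples
    have hpar1 : ∀ m : Fin 4 → Bool,
        ((Finset.univ.filter fun j => xorv ![false,true,false,false] m j = true).card
        + (Finset.univ.filter fun j =>
            xorv (xorv ![true,false,false,false] ![false,true,false,false]) m j = true).card
        + (Finset.univ.filter fun j => xorv ![true,false,false,false] m j = true).card) % 2
        = (Finset.univ.filter fun j => m j = true).card % 2 := by decide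
    have hpar2 : ∀ m : Fin 4 → Bool,
        ((Finset.univ.filter fun j => xorv ![false,false,false,true] m j = true).card
        + (Finset.univ.filter fun j =>
            xorv (xorv ![false,false,true,false] ![false,false,false,true]) m j = true).card
        + (Finset.univ.filter fun j => xorv ![false,false,true,false] m j = true).card) % 2
        = (Finset.univ.filter fun j => m j = true).card % 2 := by decide
    have hpar3 : ∀ m : Fin 4 → Bool,
        ((Finset.univ.filter fun j => xorv ![false,true,false,true] m j = true).card
        + (Finset.univ.filter fun j =>
            xorv (xorv ![true,false,true,false] ![false,true,false,true]) m j = true).card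
        + (Finset.univ.filter fun j => xorv ![true,false,true,false] m j = true).card) % 2
        = (Finset.univ.filter fun j => m j = true).card % 2 := by decide
    have hx1 : xorv ![true,false,false,false] ![false,true,false,false]
        = ![true,true,false,false] := by funext j; fin_cases j <;> rfl
    have hx2 : xorv ![false,false,true,false] ![false,false,false,true]
        = ![false,false,true,true] := by funext j; fin_cases j <;> rfl
    have hx3 : xorv ![true,false,true,false] ![false,true,false,true]
        = ![true,true,true,true] := by funext j; fin_cases j <;> rfl
    have hid1 := Mop_triple Dh hunit c μ ![true,false,false,false] ![false,true,false,false]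
      (by decide) (hpar1 μ)
    rw [hx1] at hid1
    have hid2 := Mop_triple Dh hunit c μ ![false,false,true,false] ![false,false,false,true]
      (by decide) (hpar2 μ)
    rw [hx2] at hid2
    have hid3 := Mop_triple Dh hunit c μ ![true,false,true,false] ![false,true,false,true]
      (by decide) (hpar3 μ)
    rw [hx3] at hid3
    have ht1 : 6 * (rr c (xorv ![false,true,false,false] μ) + rr c (xorv ![true,true,false,false] μ)
        + rr c (xorv ![true,false,false,false] μ)) ≤ 16 + 2 * rr c μ :=
      triple_trace_ineq (Mop_herm Dh hherm c _) (Mop_herm Dh hherm c _) (Mop_herm Dh hherm c _)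
        (Mop_herm Dh hherm c μ) (Mop_sq Dh hunit c _) (Mop_sq Dh hunit c _) (Mop_sq Dh hunit c _)
        hid1 hpsd htr
    have ht2 : 6 * (rr c (xorv ![false,false,false,true] μ) + rr c (xorv ![false,false,true,true] μ)
        + rr c (xorv ![false,false,true,false] μ)) ≤ 16 + 2 * rr c μ :=
      triple_trace_ineq (Mop_herm Dh hherm c _) (Mop_herm Dh hherm c _) (Mop_herm Dh hherm c _)
        (Mop_herm Dh hherm c μ) (Mop_sq Dh hunit c _) (Mop_sq Dh hunit c _) (Mop_sq Dh hunit c _)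
        hid2 hpsd htr
    have ht3 : 6 * (rr c (xorv ![false,true,false,true] μ) + rr c (xorv ![true,true,true,true] μ)
        + rr c (xorv ![true,false,true,false] μ)) ≤ 16 + 2 * rr c μ :=
      triple_trace_ineq (Mop_herm Dh hherm c _) (Mop_herm Dh hherm c _) (Mop_herm Dh hherm c _)
        (Mop_herm Dh hherm c μ) (Mop_sq Dh hunit c _) (Mop_sq Dh hunit c _) (Mop_sq Dh hunit c _)
        hid3 hpsd htr
    show 1 - 32 * ε ≤ rr c μ
    linarith
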